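/- There exists a tree t : {0,1}^* → {a,b} which is positively ultimately constant everywhere (PUCE): for every node n ∈ {0,1}^*, the set of branches visiting n along which only finitely many prefixes are labelled a by t has positive μ-measure, and the set of branches visiting n along which only finitely many prefixes are labelled b by t has positive μ-measure. -/

import Mathlib

open MeasureTheory

/-- The cylinder of a finite binary word `w`: the set of branches of the infinite
binary tree that visit the node `w`, i.e. have `w` as a prefix. -/
def cylinder (w : List Bool) : Set (ℕ → Bool) :=
  {b | ∀ i : Fin w.length, b i = w.get i}

/-- `μ` is the uniform probability measure on the space of branches of the infinite
binary tree: the infinite product of fair-coin Bernoulli(1/2) measures. -/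
def IsUniformBernoulli (μ : Measure (ℕ → Bool)) : Prop :=
  IsProbabilityMeasure μ ∧ ∀ w : List Bool, μ (cylinder w) = (2 : ENNReal)⁻¹ ^ w.length

/-- The length-`k` prefix of a branch `b`. -/
def branchPrefix (b : ℕ → Bool) (k : ℕ) : List Bool :=
  List.ofFn fun i : Fin k => b i

/-! ### Construction of a PUCE tree

We partition `ℕ` into consecutive "blocks", block `j` occupying positions
`[2^(j+1) - 2, 2^(j+2) - 2)` (so of length `2^(j+1)`).  The label of a node `w`
is the value of the last complete monochromatic block of `w` (`true` by default).
From any node one can deterministically fill in the next full block with a value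
`u`, and by a Borel–Cantelli estimate, with positive probability no later block
is monochromatic with value `!u`, so the labels along the branch stay `u`
from that point on. -/

/-- Start of block `j`: block `j` occupies positions `[bS j, bS (j+1))`. -/
def bS (j : ℕ) : ℕ := 2 ^ (j + 1) - 2

lemma bS_add_two (j : ℕ) : bS j + 2 = 2 ^ (j + 1) := by
  have h : 2 ^ 1 ≤ 2 ^ (j + 1) := Nat.pow_le_pow_right (by norm_num) (by omega)
  norm_num at h
  unfold bS; omega

lemma bS_lt (j : ℕ) : bS j < bS (j + 1) := by
  have h1 := bS_add_two j
  have h2 := bS_add_two (j+1)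
  have : 2 ^ (j+1) < 2 ^ (j+2) := Nat.pow_lt_pow_right (by norm_num) (by omega)
  omega

lemma le_bS (j : ℕ) : j ≤ bS j := by
  have h1 := bS_add_two j
  have h2 : j < 2 ^ j := Nat.lt_two_pow_self
  have h3 : 2 ^ (j + 1) = 2 * 2 ^ j := by ring
  omega

lemma bS_succ_sub (j : ℕ) : bS (j + 1) - bS j = 2 ^ (j + 1) := by
  have h1 := bS_add_two j
  have h2 := bS_add_two (j+1)
  have : 2 ^ (j+2) = 2 * 2 ^ (j+1) := by ring
  omega

/-- Block `j` of `w` is complete and monochromatic with value `v`. -/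
def IsMonoP (w : List Bool) (j : ℕ) (v : Bool) : Prop :=
  bS (j+1) ≤ w.length ∧ ∀ i, bS j ≤ i → i < bS (j+1) → w.getD i (!v) = v

open Classical in
/-- The mode of `w` taking into account blocks `0, …, j-1`: the value of the last
complete monochromatic block among them (`true` if there is none). -/
noncomputable def modeB (w : List Bool) : ℕ → Bool
  | 0 => true
  | j+1 => if IsMonoP w j true then true else if IsMonoP w j false then false else modeB w j

/-- The PUCE tree: the label of a node is the value of its last complete
monochromatic block. -/
noncomputable def treeT (w : List Bool) : Bool := modeB w w.length

lemma branchPrefix_length (b : ℕ → Bool) (k : ℕ) : (branchPrefix b k).length = k := by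
  simp [branchPrefix]

lemma branchPrefix_getD (b : ℕ → Bool) (k i : ℕ) (d : Bool) (h : i < k) :
    (branchPrefix b k).getD i d = b i := by
  rw [List.getD_eq_getElem _ _ (by simp [branchPrefix_length, h])]
  simp [branchPrefix]

lemma isMonoP_bp (b : ℕ → Bool) (k j : ℕ) (v : Bool) :
    IsMonoP (branchPrefix b k) j v ↔
      bS (j+1) ≤ k ∧ ∀ i, bS j ≤ i → i < bS (j+1) → b i = v := by
  unfold IsMonoP
  rw [branchPrefix_length]
  constructor
  · rintro ⟨h1, h2⟩
    refine ⟨h1, fun i hi1 hi2 => ?_⟩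
    have := h2 i hi1 hi2
    rwa [branchPrefix_getD _ _ _ _ (lt_of_lt_of_le hi2 h1)] at this
  · rintro ⟨h1, h2⟩
    refine ⟨h1, fun i hi1 hi2 => ?_⟩
    rw [branchPrefix_getD _ _ _ _ (lt_of_lt_of_le hi2 h1)]
    exact h2 i hi1 hi2

/-- The set of branches whose block `j` is monochromatic with value `u`. -/
def BadB (j : ℕ) (u : Bool) : Set (ℕ → Bool) :=
  {b | ∀ i, bS j ≤ i → i < bS (j+1) → b i = u}

open Classical in
lemma modeB_succ (w : List Bool) (j : ℕ) :
    modeB w (j+1) =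
      if IsMonoP w j true then true else if IsMonoP w j false then false else modeB w j := rfl

lemma mode_eq (b : ℕ → Bool) (j0 : ℕ) (u : Bool)
    (h1 : ∀ i, bS j0 ≤ i → i < bS (j0+1) → b i = u)
    (h2 : ∀ j, j0 < j → b ∉ BadB j (!u)) (k : ℕ) (hk : bS (j0+1) ≤ k) :
    ∀ j, j0 ≤ j → modeB (branchPrefix b k) (j+1) = u := by
  intro j hj
  induction j, hj using Nat.le_induction with
  | base =>
    have hmono : IsMonoP (branchPrefix b k) j0 u := (isMonoP_bp ..).mpr ⟨hk, h1⟩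
    rw [modeB_succ]
    cases u with
    | true => rw [if_pos hmono]
    | false =>
      rw [if_neg, if_pos hmono]
      intro h
      rw [isMonoP_bp] at h
      have ht := h.2 (bS j0) le_rfl (bS_lt j0)
      have hf := h1 (bS j0) le_rfl (bS_lt j0)
      simp [ht] at hf
  | succ j hjj IH =>
    rw [modeB_succ]
    by_cases hT : IsMonoP (branchPrefix b k) (j+1) true
    · rw [if_pos hT]
      cases u with
      | true => rfl
      | false =>
        exfalso
        refine h2 (j+1) (by omega) ?_
        intro i hi1 hi2
        rw [isMonoP_bp] at hT
        simpa using hT.2 i hi1 hi2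
    · rw [if_neg hT]
      by_cases hF : IsMonoP (branchPrefix b k) (j+1) false
      · rw [if_pos hF]
        cases u with
        | false => rfl
        | true =>
          exfalso
          refine h2 (j+1) (by omega) ?_
          intro i hi1 hi2
          rw [isMonoP_bp] at hF
          simpa using hF.2 i hi1 hi2
      · rw [if_neg hF]; exact IH

lemma treeT_bp (b : ℕ → Bool) (j0 : ℕ) (u : Bool)
    (h1 : ∀ i, bS j0 ≤ i → i < bS (j0+1) → b i = u)
    (h2 : ∀ j, j0 < j → b ∉ BadB j (!u)) (k : ℕ) (hk : bS (j0+1) ≤ k) :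
    treeT (branchPrefix b k) = u := by
  have hj0k : j0 + 1 ≤ k := le_trans (le_bS (j0+1)) hk
  obtain ⟨m, rfl⟩ : ∃ m, k = m + 1 := ⟨k - 1, by omega⟩
  unfold treeT
  rw [branchPrefix_length]
  exact mode_eq b j0 u h1 h2 (m+1) hk m (by omega)

lemma measure_BadB_le (μ : Measure (ℕ → Bool)) (hμ : IsUniformBernoulli μ) (j : ℕ) (u : Bool) :
    μ (BadB j u) ≤ (2 : ENNReal)⁻¹ ^ (2 ^ (j+1)) := by
  set s := bS j with hs
  set l := 2 ^ (j+1) with hl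
  have hsl : s + l = bS (j+1) := by
    have := bS_succ_sub j
    have := bS_lt j
    omega
  have hsub : BadB j u ⊆ ⋃ f : Fin s → Bool,
      cylinder (List.ofFn f ++ List.replicate l u) := by
    intro b hb
    refine Set.mem_iUnion.mpr ⟨fun i => b i, ?_⟩
    intro i
    have hilen : (i : ℕ) < s + l := by
      have := i.2
      simpa using this
    rw [List.get_eq_getElem]
    by_cases hi : (i : ℕ) < s
    · rw [List.getElem_append_left (by simpa using hi)]
      simp
    · rw [List.getElem_append_right (by simpa using hi)]
      rw [List.getElem_replicate]
      exact hb (i : ℕ) (by omega) (by omega)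
  calc μ (BadB j u) ≤ ∑' f : Fin s → Bool, μ (cylinder (List.ofFn f ++ List.replicate l u)) :=
        (measure_mono hsub).trans (measure_iUnion_le _)
    _ = ∑ f : Fin s → Bool, μ (cylinder (List.ofFn f ++ List.replicate l u)) := tsum_fintype _
    _ = ∑ f : Fin s → Bool, (2 : ENNReal)⁻¹ ^ (s + l) := by
        refine Finset.sum_congr rfl fun f _ => ?_
        rw [hμ.2]
        simp
    _ = (Fintype.card (Fin s → Bool) : ENNReal) * (2 : ENNReal)⁻¹ ^ (s + l) := by
        rw [Finset.sum_const, nsmul_eq_mul]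
        simp
    _ = (2 : ENNReal) ^ s * ((2 : ENNReal)⁻¹ ^ s * (2 : ENNReal)⁻¹ ^ l) := by
        rw [Fintype.card_fun, pow_add]
        push_cast
        simp
    _ = (2 : ENNReal)⁻¹ ^ l := by
        rw [← mul_assoc, ← mul_pow, ENNReal.mul_inv_cancel (by norm_num) (by norm_num),
          one_pow, one_mul]

lemma two_pow_add_le (a : ℕ) : ∀ j : ℕ, 2 ^ a + j ≤ 2 ^ (a + j) := by
  intro j
  induction j with
  | zero => simp
  | succ j ih =>
    have h : 1 ≤ 2 ^ (a + j) := Nat.one_le_two_pow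
    have : 2 ^ (a + (j+1)) = 2 ^ (a+j) + 2 ^ (a+j) := by rw [← add_assoc, pow_succ]; ring
    omega

lemma key (μ : Measure (ℕ → Bool)) (hμ : IsUniformBernoulli μ) (u : Bool) (n : List Bool) :
    0 < μ {b | b ∈ cylinder n ∧ {k : ℕ | treeT (branchPrefix b k) = !u}.Finite} := by
  set L := n.length with hLdef
  set j0 := L with hj0
  have hL : L ≤ bS j0 := le_bS L
  set K := bS (j0+1) with hK
  have hLK : L ≤ K := le_trans hL (bS_lt j0).le
  set w' : List Bool := n ++ List.replicate (K - L) u with hw'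
  have hw'len : w'.length = K := by
    simp only [hw', List.length_append, List.length_replicate]
    omega
  set Bad : Set (ℕ → Bool) := ⋃ j : ℕ, BadB (j0+1+j) (!u) with hBadDef
  set E := cylinder w' \ Bad with hE
  -- branch bits agree with w' on [0, K)
  have hbit : ∀ b ∈ cylinder w', ∀ i (hi : i < K), b i = w'[i]'(by omega) := by
    intro b hb i hi
    have := hb ⟨i, by omega⟩
    rwa [List.get_eq_getElem] at this
  -- E is contained in the target set
  have hsub : E ⊆ {b | b ∈ cylinder n ∧ {k : ℕ | treeT (branchPrefix b k) = !u}.Finite} := by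
    rintro b ⟨hbc, hbB⟩
    have h1 : ∀ i, bS j0 ≤ i → i < K → b i = u := by
      intro i hi1 hi2
      rw [hbit b hbc i hi2]
      rw [List.getElem_append_right (by omega)]
      exact List.getElem_replicate ..
    have h2 : ∀ j, j0 < j → b ∉ BadB j (!u) := by
      intro j hj hmem
      exact hbB (Set.mem_iUnion.mpr ⟨j - j0 - 1, by
        have : j0 + 1 + (j - j0 - 1) = j := by omega
        rwa [this]⟩)
    constructor
    · intro i
      have hi2 : (i : ℕ) < K := lt_of_lt_of_le i.2 hLK
      rw [List.get_eq_getElem]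
      rw [hbit b hbc i hi2]
      rw [List.getElem_append_left]
    · refine Set.Finite.subset (Set.finite_Iio K) ?_
      intro k hk
      by_contra hkK
      simp only [Set.mem_Iio, not_lt] at hkK
      have := treeT_bp b j0 u h1 h2 k hkK
      rw [Set.mem_setOf_eq, this] at hk
      simp at hk
  -- measure estimates
  have hcylm : μ (cylinder w') = (2 : ENNReal)⁻¹ ^ K := by rw [hμ.2, hw'len]
  have hBadle : μ Bad ≤ (2 : ENNReal)⁻¹ ^ K * 2⁻¹ := by
    have step1 : μ Bad ≤ ∑' j : ℕ, (2 : ENNReal)⁻¹ ^ (2 ^ (j0 + 2 + j)) := by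
      refine (measure_iUnion_le _).trans (ENNReal.tsum_le_tsum fun j => ?_)
      have := measure_BadB_le μ hμ (j0 + 1 + j) (!u)
      have harr : j0 + 1 + j + 1 = j0 + 2 + j := by omega
      rwa [harr] at this
    have step2 : ∑' j : ℕ, (2 : ENNReal)⁻¹ ^ (2 ^ (j0 + 2 + j))
        ≤ ∑' j : ℕ, (2 : ENNReal)⁻¹ ^ (2 ^ (j0 + 2) + j) := by
      refine ENNReal.tsum_le_tsum fun j => ?_
      exact pow_le_pow_of_le_one zero_le (ENNReal.inv_le_one.mpr one_le_two)
        (two_pow_add_le (j0+2) j)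
    have step3 : ∑' j : ℕ, (2 : ENNReal)⁻¹ ^ (2 ^ (j0 + 2) + j)
        = (2 : ENNReal)⁻¹ ^ (2 ^ (j0 + 2)) * 2 := by
      have : ∀ j : ℕ, (2 : ENNReal)⁻¹ ^ (2 ^ (j0 + 2) + j)
          = (2 : ENNReal)⁻¹ ^ (2 ^ (j0 + 2)) * (2 : ENNReal)⁻¹ ^ j := fun j => pow_add ..
      rw [tsum_congr this, ENNReal.tsum_mul_left, ENNReal.tsum_geometric,
        ENNReal.one_sub_inv_two, inv_inv]
    have hKe : 2 ^ (j0 + 2) = K + 2 := (bS_add_two (j0+1)).symm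
    have step4 : (2 : ENNReal)⁻¹ ^ (2 ^ (j0 + 2)) * 2 = (2 : ENNReal)⁻¹ ^ K * 2⁻¹ := by
      rw [hKe, pow_add]
      rw [mul_assoc]
      congr 1
      rw [sq, mul_assoc, ENNReal.inv_mul_cancel (by norm_num) (by norm_num), mul_one]
    calc μ Bad ≤ _ := step1
      _ ≤ _ := step2
      _ = _ := step3
      _ = _ := step4
  have hne0 : ((2 : ENNReal)⁻¹ ^ K) ≠ 0 := by
    apply pow_ne_zero
    simp
  have hnetop : ((2 : ENNReal)⁻¹ ^ K) ≠ ⊤ := by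
    apply ENNReal.pow_ne_top
    simp
  have hBadlt : μ Bad < μ (cylinder w') := by
    rw [hcylm]
    refine lt_of_le_of_lt hBadle ?_
    have hhalf : (2 : ENNReal)⁻¹ ^ K * 2⁻¹ = (2 : ENNReal)⁻¹ ^ K / 2 := by
      rw [div_eq_mul_inv]
    rw [hhalf]
    exact ENNReal.half_lt_self hne0 hnetop
  have hEpos : 0 < μ E := by
    rw [pos_iff_ne_zero]
    intro h0
    · have hcov : cylinder w' ⊆ E ∪ Bad := by
        intro x hx
        by_cases hxB : x ∈ Bad
        · exact Or.inr hxB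
        · exact Or.inl ⟨hx, hxB⟩
      have : μ (cylinder w') ≤ μ E + μ Bad :=
        (measure_mono hcov).trans (measure_union_le _ _)
      rw [h0, zero_add] at this
      exact absurd this (not_le.mpr hBadlt)
  exact lt_of_lt_of_le hEpos (measure_mono hsub)

/-- There exists a PUCE tree over the two-letter alphabet `{a, b}` (encoded as
`Bool`, `true` playing the role of `a` and `false` the role of `b`): for every
node, the branches through that node with finitely many `a`-labelled prefixes
have positive measure, and likewise for `b`. -/
theorem stmt_4 (μ : Measure (ℕ → Bool)) (hμ : IsUniformBernoulli μ) :
    ∃ t : List Bool → Bool, ∀ n : List Bool,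
      0 < μ {b | b ∈ cylinder n ∧ {k : ℕ | t (branchPrefix b k) = true}.Finite} ∧
      0 < μ {b | b ∈ cylinder n ∧ {k : ℕ | t (branchPrefix b k) = false}.Finite} := by
  exact ⟨treeT, fun n => ⟨key μ hμ false n, key μ hμ true n⟩⟩
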